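/- (Bipartite path-avoidance claim, Section 4.3.) Let G be a finite simple bipartite graph, let φ be a proper partial edge coloring of G with color set C, let uv be an uncolored edge, and let α, β ∈ C be distinct colors with α ∈ M(v), β ∈ M(u), and α ∉ M(u). Then the αβ-alternating path starting at u does not contain the vertex v. Consequently, augmenting this path and then coloring uv with α yields a proper partial edge coloring whose colored edges are those of φ together with uv. -/

import Mathlib

/-- A proper partial edge coloring of `G` with color set `C`. -/
def IsProperPartialEC {V : Type*} (G : SimpleGraph V) (C : Set ℕ)
    (φ : Sym2 V → Option ℕ) : Prop :=
  (∀ e : Sym2 V, φ e ≠ none → e ∈ G.edgeSet) ∧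
  (∀ (e : Sym2 V) (c : ℕ), φ e = some c → c ∈ C) ∧
  (∀ e₁ e₂ : Sym2 V, e₁ ≠ e₂ → (∃ x : V, x ∈ e₁ ∧ x ∈ e₂) →
    ∀ c : ℕ, φ e₁ = some c → φ e₂ ≠ some c)

/-- `missingColors G C φ x` is the set `M(x)` of colors of `C` not assigned by `φ`
to any edge of `G` incident to `x`. -/
def missingColors {V : Type*} (G : SimpleGraph V) (C : Set ℕ)
    (φ : Sym2 V → Option ℕ) (x : V) : Set ℕ :=
  {c | c ∈ C ∧ ∀ e ∈ G.edgeSet, x ∈ e → φ e ≠ some c}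

/-- A maximal `αβ`-alternating path. -/
def IsMaxAltPath {V : Type*} (G : SimpleGraph V) (φ : Sym2 V → Option ℕ)
    (α β : ℕ) {u v : V} (p : G.Walk u v) : Prop :=
  p.IsPath ∧
  (∀ e ∈ p.edges, φ e = some α ∨ φ e = some β) ∧
  List.Chain' (fun e₁ e₂ => φ e₁ ≠ φ e₂) p.edges ∧
  (∀ e ∈ G.edgeSet, u ∈ e → (φ e = some α ∨ φ e = some β) → e ∈ p.edges) ∧
  (∀ e ∈ G.edgeSet, v ∈ e → (φ e = some α ∨ φ e = some β) → e ∈ p.edges)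

/-- Augmenting along the list of edges `es`: swap the colors `α` and `β` on `es`. -/
def augmentColoring {V : Type*} [DecidableEq V] (φ : Sym2 V → Option ℕ)
    (α β : ℕ) (es : List (Sym2 V)) : Sym2 V → Option ℕ :=
  fun e => if e ∈ es then
    (if φ e = some α then some β else if φ e = some β then some α else φ e)
  else φ e

lemma aux_mem_support_of_mem_edges {V : Type*} {G : SimpleGraph V} {a z : V}
    (p : G.Walk a z) {e : Sym2 V} {x : V} (he : e ∈ p.edges) (hx : x ∈ e) :
    x ∈ p.support := by
  induction e using Sym2.ind with
  | _ s t =>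
    rcases Sym2.mem_iff.mp hx with rfl | rfl
    · exact p.fst_mem_support_of_mem_edges he
    · exact p.snd_mem_support_of_mem_edges he

lemma aux_start_edge {V : Type*} {G : SimpleGraph V} {a z : V}
    (p : G.Walk a z) (hp : p.IsPath) {e : Sym2 V} (he : e ∈ p.edges) (ha : a ∈ e) :
    p.edges.head? = some e := by
  cases p with
  | nil => simp at he
  | cons h q =>
    rw [SimpleGraph.Walk.edges_cons]
    rcases List.mem_cons.mp he with rfl | he'
    · rfl
    · exact (((SimpleGraph.Walk.cons_isPath_iff _ _).mp hp).2
        (aux_mem_support_of_mem_edges q he' ha)).elim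

lemma aux_alt_incoming {V : Type*} {G : SimpleGraph V} (f : V → Bool)
    (hbip : ∀ a b : V, G.Adj a b → f a ≠ f b)
    (φ : Sym2 V → Option ℕ) :
    ∀ {a z : V} (p : G.Walk a z) (γ δ : ℕ), p.IsPath →
      (∀ e ∈ p.edges, φ e = some γ ∨ φ e = some δ) →
      List.Chain' (fun e₁ e₂ => φ e₁ ≠ φ e₂) p.edges →
      (∀ e ∈ p.edges, a ∈ e → φ e = some γ) →
      ∀ x ∈ p.support, x ≠ a →
        ∃ e ∈ p.edges, x ∈ e ∧ φ e = some (if f x = f a then δ else γ) := by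
  intro a z p
  induction p with
  | nil =>
    intro γ δ _ _ _ _ x hx hxa
    simp only [SimpleGraph.Walk.support_nil, List.mem_singleton] at hx
    exact absurd hx hxa
  | @cons a b z h q ih =>
    intro γ δ hpath hcol hch hstart x hx hxa
    have hq : q.IsPath := ((SimpleGraph.Walk.cons_isPath_iff _ _).mp hpath).1
    have hab : φ s(a, b) = some γ := by
      refine hstart _ ?_ ?_
      · simp
      · simp
    rw [SimpleGraph.Walk.edges_cons] at hcol hch
    have hch' := List.isChain_cons.mp hch
    have hx' : x ∈ q.support := by
      rcases (by simpa using hx : x = a ∨ x ∈ q.support) with rfl | hx'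
      · exact absurd rfl hxa
      · exact hx'
    have hfab : f a ≠ f b := hbip a b h
    by_cases hxb : x = b
    · subst hxb
      refine ⟨s(a, x), by simp, by simp, ?_⟩
      rw [if_neg (fun hh => hfab hh.symm)]
      exact hab
    · have hstart' : ∀ e ∈ q.edges, b ∈ e → φ e = some δ := by
        intro e he hbe
        have hhead := aux_start_edge q hq he hbe
        have hne : φ s(a, b) ≠ φ e := hch'.1 e (by rw [hhead]; simp)
        rcases hcol e (by simp [he]) with h1 | h1
        · exact absurd (hab.trans h1.symm) hne
        · exact h1
      obtain ⟨e, he, hxe, hec⟩ := ih δ γ hq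
        (fun e he => (hcol e (by simp [he])).symm) hch'.2 hstart' x hx' hxb
      refine ⟨e, by simp [he], hxe, ?_⟩
      rw [hec]
      congr 1
      by_cases hfa : f x = f a
      · rw [if_pos hfa, if_neg (fun hh => hfab ((hfa.symm.trans hh)))]
      · rw [if_neg hfa, if_pos ?_]
        revert hfa hfab
        cases f x <;> cases f a <;> cases f b <;> simp
  
lemma aux_two_edges {V : Type*} {G : SimpleGraph V} (φ : Sym2 V → Option ℕ) (α β : ℕ) :
    ∀ {a z : V} (p : G.Walk a z), p.IsPath →
      (∀ e ∈ p.edges, φ e = some α ∨ φ e = some β) →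
      List.Chain' (fun e₁ e₂ => φ e₁ ≠ φ e₂) p.edges →
      ∀ x ∈ p.support, x ≠ a → x ≠ z →
        (∃ e ∈ p.edges, x ∈ e ∧ φ e = some α) ∧
        (∃ e ∈ p.edges, x ∈ e ∧ φ e = some β) := by
  intro a z p
  induction p with
  | nil =>
    intro _ _ _ x hx hxa _
    simp only [SimpleGraph.Walk.support_nil, List.mem_singleton] at hx
    exact absurd hx hxa
  | @cons a b z h q ih =>
    intro hpath hcol hch x hx hxa hxz
    have hq : q.IsPath := ((SimpleGraph.Walk.cons_isPath_iff _ _).mp hpath).1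
    rw [SimpleGraph.Walk.edges_cons] at hcol hch
    have hx' : x ∈ q.support := by
      rcases (by simpa using hx : x = a ∨ x ∈ q.support) with rfl | hx'
      · exact absurd rfl hxa
      · exact hx'
    by_cases hxb : x = b
    · subst hxb
      cases q with
      | nil => exact absurd rfl hxz
      | @cons b c z h' r =>
        rw [SimpleGraph.Walk.edges_cons] at hcol hch
        have hne : φ s(a, x) ≠ φ s(x, c) := (List.isChain_cons_cons.mp hch).1
        rcases hcol s(a, x) (by simp) with h1 | h1 <;>
          rcases hcol s(x, c) (by simp) with h2 | h2
        · exact absurd (h1.trans h2.symm) hne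
        · exact ⟨⟨s(a, x), by simp, by simp, h1⟩, ⟨s(x, c), by simp, by simp, h2⟩⟩
        · exact ⟨⟨s(x, c), by simp, by simp, h2⟩, ⟨s(a, x), by simp, by simp, h1⟩⟩
        · exact absurd (h1.trans h2.symm) hne
    · obtain ⟨⟨e₁, he₁, hxe₁, hc₁⟩, ⟨e₂, he₂, hxe₂, hc₂⟩⟩ :=
        ih hq (fun e he => hcol e (by simp [he])) (List.isChain_cons.mp hch).2
          x hx' hxb hxz
      exact ⟨⟨e₁, by simp [he₁], hxe₁, hc₁⟩, ⟨e₂, by simp [he₂], hxe₂, hc₂⟩⟩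

lemma aux_saturation {V : Type*} {G : SimpleGraph V} {C : Set ℕ}
    {φ : Sym2 V → Option ℕ} (hφ : IsProperPartialEC G C φ) {α β : ℕ}
    {u z : V} (p : G.Walk u z) (hp : IsMaxAltPath G φ α β p) :
    ∀ x ∈ p.support, ∀ e ∈ G.edgeSet, x ∈ e →
      (φ e = some α ∨ φ e = some β) → e ∈ p.edges := by
  obtain ⟨hpath, hcol, hch, hmaxu, hmaxz⟩ := hp
  intro x hx e he hxe hc
  by_cases hxu : x = u
  · exact hmaxu e he (hxu ▸ hxe) hc
  by_cases hxz : x = z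
  · exact hmaxz e he (hxz ▸ hxe) hc
  obtain ⟨⟨e₁, he₁, hxe₁, hc₁⟩, ⟨e₂, he₂, hxe₂, hc₂⟩⟩ :=
    aux_two_edges φ α β p hpath hcol hch x hx hxu hxz
  rcases hc with hc | hc
  · by_cases heq : e = e₁
    · exact heq ▸ he₁
    · exact absurd hc (hφ.2.2 e₁ e (fun hh => heq hh.symm) ⟨x, hxe₁, hxe⟩ α hc₁)
  · by_cases heq : e = e₂
    · exact heq ▸ he₂
    · exact absurd hc (hφ.2.2 e₂ e (fun hh => heq hh.symm) ⟨x, hxe₂, hxe⟩ β hc₂)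

/-- **Bipartite path-avoidance claim.** In a bipartite graph, if `u v` is uncolored,
`α ∈ M(v)`, `β ∈ M(u)` and `α ∉ M(u)`, then the maximal `αβ`-alternating path
starting at `u` does not contain `v`; augmenting it and then coloring `u v` with `α`
yields a proper partial coloring whose colored edges are those of `φ` plus `u v`. -/
theorem bipartite_alt_path_avoids_v {V : Type*} [Fintype V] [DecidableEq V]
    (G : SimpleGraph V)
    (f : V → Bool) (hbip : ∀ a b : V, G.Adj a b → f a ≠ f b)
    (C : Set ℕ) (φ : Sym2 V → Option ℕ)
    (hφ : IsProperPartialEC G C φ)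
    (α β : ℕ) (hαβ : α ≠ β) (hαC : α ∈ C) (hβC : β ∈ C)
    (u v : V) (huv : G.Adj u v) (hun : φ s(u, v) = none)
    (hαv : α ∈ missingColors G C φ v) (hβu : β ∈ missingColors G C φ u)
    (hαu : α ∉ missingColors G C φ u)
    (z : V) (p : G.Walk u z) (hp : IsMaxAltPath G φ α β p) :
    v ∉ p.support ∧
    IsProperPartialEC G C
      (Function.update (augmentColoring φ α β p.edges) s(u, v) (some α)) ∧
    {e : Sym2 V |
        Function.update (augmentColoring φ α β p.edges) s(u, v) (some α) e ≠ none} =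
      insert s(u, v) {e : Sym2 V | φ e ≠ none} := by
  obtain ⟨hpath, hcol, hch, hmaxu, hmaxz⟩ := hp
  have hG1 := hφ.1
  have hG2 := hφ.2.1
  have hG3 := hφ.2.2
  have hfuv : f u ≠ f v := hbip u v huv
  set ψ := augmentColoring φ α β p.edges with hψdef
  -- every path edge at u is colored α
  have hstartα : ∀ e ∈ p.edges, u ∈ e → φ e = some α := by
    intro e he hu
    have heG : e ∈ G.edgeSet := p.edges_subset_edgeSet he
    rcases hcol e he with h | h
    · exact h
    · exact absurd h (hβu.2 e heG hu)
  -- Part 1 : v is not on the path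
  have hvnotin : v ∉ p.support := by
    intro hv
    have hvu : v ≠ u := fun h => hfuv (by rw [h])
    obtain ⟨e, he, hve, hec⟩ :=
      aux_alt_incoming f hbip φ p α β hpath hcol hch hstartα v hv hvu
    rw [if_neg (fun h => hfuv h.symm)] at hec
    exact hαv.2 e (p.edges_subset_edgeSet he) hve hec
  have hsat := aux_saturation hφ p ⟨hpath, hcol, hch, hmaxu, hmaxz⟩
  have hsuv_not : s(u, v) ∉ p.edges := by
    intro h
    rcases hcol _ h with h' | h' <;> rw [hun] at h' <;> exact nomatch h'
  -- basic computations for ψ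
  have hψ_out : ∀ e ∉ p.edges, ψ e = φ e := by
    intro e he; simp [hψdef, augmentColoring, he]
  have hψ_swapα : ∀ e ∈ p.edges, φ e = some α → ψ e = some β := by
    intro e he hc; simp [hψdef, augmentColoring, he, hc]
  have hψ_swapβ : ∀ e ∈ p.edges, φ e = some β → ψ e = some α := by
    intro e he hc
    have hne : φ e ≠ some α := by rw [hc]; simp [Ne.symm hαβ]
    simp only [hψdef, augmentColoring]
    rw [if_pos he, if_neg hne, if_pos hc]
  -- ψ never assigns α at a vertex of s(u,v)
  have hψu : ∀ e, u ∈ e → ψ e ≠ some α := by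
    intro e hu hcα
    by_cases he : e ∈ p.edges
    · rw [hψ_swapα e he (hstartα e he hu)] at hcα
      exact hαβ (Option.some.inj hcα).symm
    · rw [hψ_out e he] at hcα
      exact he (hmaxu e (hG1 e (by rw [hcα]; exact Option.some_ne_none _)) hu (Or.inl hcα))
  have hψv : ∀ e, v ∈ e → ψ e ≠ some α := by
    intro e hv hcα
    by_cases he : e ∈ p.edges
    · exact hvnotin (aux_mem_support_of_mem_edges p he hv)
    · rw [hψ_out e he] at hcα
      exact hαv.2 e (hG1 e (by rw [hcα]; exact Option.some_ne_none _)) hv hcα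
  -- ψ is a proper partial edge coloring
  have hψ1 : ∀ e, ψ e ≠ none → e ∈ G.edgeSet := by
    intro e he
    by_cases hm : e ∈ p.edges
    · exact p.edges_subset_edgeSet hm
    · rw [hψ_out e hm] at he; exact hG1 e he
  have hψ3 : ∀ e₁ e₂ : Sym2 V, e₁ ≠ e₂ → (∃ x : V, x ∈ e₁ ∧ x ∈ e₂) →
      ∀ c : ℕ, ψ e₁ = some c → ψ e₂ ≠ some c := by
    intro e₁ e₂ hne hsh c h1 h2
    obtain ⟨x, hx1, hx2⟩ := hsh
    by_cases m1 : e₁ ∈ p.edges <;> by_cases m2 : e₂ ∈ p.edges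
    · rcases hcol e₁ m1 with a1 | a1 <;> rcases hcol e₂ m2 with a2 | a2
      · exact hG3 e₁ e₂ hne ⟨x, hx1, hx2⟩ α a1 a2
      · rw [hψ_swapα e₁ m1 a1] at h1
        rw [hψ_swapβ e₂ m2 a2] at h2
        exact hαβ (Option.some.inj (h2.trans h1.symm))
      · rw [hψ_swapβ e₁ m1 a1] at h1
        rw [hψ_swapα e₂ m2 a2] at h2
        exact hαβ (Option.some.inj (h1.trans h2.symm))
      · exact hG3 e₁ e₂ hne ⟨x, hx1, hx2⟩ β a1 a2
    · -- e₁ on the path, e₂ not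
      rw [hψ_out e₂ m2] at h2
      have hxs : x ∈ p.support := aux_mem_support_of_mem_edges p m1 hx1
      have he₂G : e₂ ∈ G.edgeSet := hG1 e₂ (by rw [h2]; exact Option.some_ne_none _)
      have hc2 : φ e₂ = some α ∨ φ e₂ = some β := by
        rcases hcol e₁ m1 with a1 | a1
        · rw [hψ_swapα e₁ m1 a1] at h1
          exact Or.inr (by rw [h2, ← Option.some.inj h1])
        · rw [hψ_swapβ e₁ m1 a1] at h1
          exact Or.inl (by rw [h2, ← Option.some.inj h1])
      exact m2 (hsat x hxs e₂ he₂G hx2 hc2)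
    · -- e₂ on the path, e₁ not
      rw [hψ_out e₁ m1] at h1
      have hxs : x ∈ p.support := aux_mem_support_of_mem_edges p m2 hx2
      have he₁G : e₁ ∈ G.edgeSet := hG1 e₁ (by rw [h1]; exact Option.some_ne_none _)
      have hc1 : φ e₁ = some α ∨ φ e₁ = some β := by
        rcases hcol e₂ m2 with a2 | a2
        · rw [hψ_swapα e₂ m2 a2] at h2
          exact Or.inr (by rw [h1, ← Option.some.inj h2])
        · rw [hψ_swapβ e₂ m2 a2] at h2
          exact Or.inl (by rw [h1, ← Option.some.inj h2])
      exact m1 (hsat x hxs e₁ he₁G hx1 hc1)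
    · rw [hψ_out e₁ m1] at h1
      rw [hψ_out e₂ m2] at h2
      exact hG3 e₁ e₂ hne ⟨x, hx1, hx2⟩ c h1 h2
  refine ⟨hvnotin, ⟨?_, ?_, ?_⟩, ?_⟩
  · -- colored edges are edges of G
    intro e he
    by_cases hq : e = s(u, v)
    · subst hq; exact huv
    · rw [Function.update_of_ne hq] at he
      exact hψ1 e he
  · -- colors belong to C
    intro e c hc
    by_cases hq : e = s(u, v)
    · subst hq
      rw [Function.update_self] at hc
      rw [← Option.some.inj hc]; exact hαC
    · rw [Function.update_of_ne hq] at hc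
      by_cases hm : e ∈ p.edges
      · rcases hcol e hm with a | a
        · rw [hψ_swapα e hm a] at hc
          rw [← Option.some.inj hc]; exact hβC
        · rw [hψ_swapβ e hm a] at hc
          rw [← Option.some.inj hc]; exact hαC
      · rw [hψ_out e hm] at hc
        exact hG2 e c hc
  · -- properness
    intro e₁ e₂ hne hsh c h1 h2
    by_cases q1 : e₁ = s(u, v) <;> by_cases q2 : e₂ = s(u, v)
    · exact hne (q1.trans q2.symm)
    · subst q1
      rw [Function.update_self] at h1
      rw [Function.update_of_ne q2] at h2
      obtain ⟨x, hx1, hx2⟩ := hsh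
      have hc2 : ψ e₂ = some α := by rw [h2, Option.some.inj h1]
      rcases Sym2.mem_iff.mp hx1 with rfl | rfl
      · exact hψu e₂ hx2 hc2
      · exact hψv e₂ hx2 hc2
    · subst q2
      rw [Function.update_self] at h2
      rw [Function.update_of_ne q1] at h1
      obtain ⟨x, hx1, hx2⟩ := hsh
      have hc1 : ψ e₁ = some α := by rw [h1, Option.some.inj h2]
      rcases Sym2.mem_iff.mp hx2 with rfl | rfl
      · exact hψu e₁ hx1 hc1
      · exact hψv e₁ hx1 hc1
    · rw [Function.update_of_ne q1] at h1
      rw [Function.update_of_ne q2] at h2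
      exact hψ3 e₁ e₂ hne hsh c h1 h2
  · -- the set of colored edges
    ext e
    simp only [Set.mem_setOf_eq, Set.mem_insert_iff]
    by_cases hq : e = s(u, v)
    · subst hq
      rw [Function.update_self]
      simp
    · rw [Function.update_of_ne hq]
      by_cases hm : e ∈ p.edges
      · rcases hcol e hm with a | a
        · rw [hψ_swapα e hm a, a]; simp [hq]
        · rw [hψ_swapβ e hm a, a]; simp [hq]
      · rw [hψ_out e hm]
        simp [hq]
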